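/- Let f : ℝ → ℝ be continuous and suppose that the map s ↦ f(s)/|s| is nondecreasing on (−∞,0) and nondecreasing on (0,∞). Let F(s) = ∫₀^s f(τ) dτ. Then for every u ∈ ℝ and every t ≥ 0 one has ((t²−1)/2)·f(u)·u − F(tu) + F(u) ≤ 0; equivalently, F(tu) ≥ F(u) + ((t²−1)/2) f(u) u. -/

import Mathlib

open MeasureTheory

/-- Pointwise inequality underlying condition (J3): if `s ↦ f(s)/|s|` is nondecreasing
on `(-∞,0)` and on `(0,∞)`, then for all `u` and `t ≥ 0`,
`((t²-1)/2)·f(u)·u - F(tu) + F(u) ≤ 0`, where `F(s) = ∫₀ˢ f`. -/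
theorem pointwise_J3_inequality (f : ℝ → ℝ) (hf : Continuous f)
    (hmono₁ : MonotoneOn (fun s => f s / |s|) (Set.Iio (0:ℝ)))
    (hmono₂ : MonotoneOn (fun s => f s / |s|) (Set.Ioi (0:ℝ))) :
    ∀ (u t : ℝ), 0 ≤ t →
      (t ^ 2 - 1) / 2 * (f u * u) - (∫ τ in (0:ℝ)..(t * u), f τ)
        + (∫ τ in (0:ℝ)..u, f τ) ≤ 0 := by
  intro u t ht
  rcases eq_or_ne u 0 with rfl | hu0
  · simp
  set Φ : ℝ → ℝ := fun x => ∫ τ in (0:ℝ)..x, f τ with hΦdef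
  have hΦ : ∀ x : ℝ, HasDerivAt Φ (f x) x := fun x =>
    intervalIntegral.integral_hasDerivAt_right (hf.intervalIntegrable _ _)
      (hf.stronglyMeasurableAtFilter _ _) hf.continuousAt
  set c : ℝ := f u * u with hc
  set g : ℝ → ℝ := fun s => (s ^ 2 - 1) / 2 * c - Φ (s * u) + Φ u with hg
  have hg' : ∀ s : ℝ, HasDerivAt g (s * c - f (s * u) * u) s := by
    intro s
    have h1 : HasDerivAt (fun s : ℝ => (s ^ 2 - 1) / 2 * c) (s * c) s := by
      have := (((hasDerivAt_pow 2 s).sub_const 1).div_const 2).mul_const c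
      convert this using 1
      · rfl
      · rfl
      · ring
    have h2 : HasDerivAt (fun s : ℝ => Φ (s * u)) (f (s * u) * u) s := by
      have := (hΦ (s * u)).comp s ((hasDerivAt_id s).mul_const u)
      simp only [id, one_mul] at this; exact this
    exact (h1.sub h2).add_const (Φ u)
  -- key sign fact for the derivative
  have key : ∀ s : ℝ, 0 < s → (s ≤ 1 → 0 ≤ s * c - f (s * u) * u) ∧
      (1 ≤ s → s * c - f (s * u) * u ≤ 0) := by
    intro s hs
    rcases lt_or_gt_of_ne hu0 with hu | hu
    · -- u < 0
      have hsu : s * u < 0 := mul_neg_of_pos_of_neg hs hu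
      constructor
      · intro hs1
        have hle : u ≤ s * u := by nlinarith
        have := hmono₁ (Set.mem_Iio.2 hu) (Set.mem_Iio.2 hsu) hle
        simp only [abs_of_neg hu, abs_of_neg hsu] at this
        rw [div_le_div_iff₀ (by linarith) (by linarith)] at this
        nlinarith
      · intro hs1
        have hle : s * u ≤ u := by nlinarith
        have := hmono₁ (Set.mem_Iio.2 hsu) (Set.mem_Iio.2 hu) hle
        simp only [abs_of_neg hu, abs_of_neg hsu] at this
        rw [div_le_div_iff₀ (by linarith) (by linarith)] at this
        nlinarith
    · -- u > 0
      have hsu : 0 < s * u := mul_pos hs hu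
      constructor
      · intro hs1
        have hle : s * u ≤ u := by nlinarith
        have := hmono₂ (Set.mem_Ioi.2 hsu) (Set.mem_Ioi.2 hu) hle
        simp only [abs_of_pos hu, abs_of_pos hsu] at this
        rw [div_le_div_iff₀ (by linarith) (by linarith)] at this
        nlinarith
      · intro hs1
        have hle : u ≤ s * u := by nlinarith
        have := hmono₂ (Set.mem_Ioi.2 hu) (Set.mem_Ioi.2 hsu) hle
        simp only [abs_of_pos hu, abs_of_pos hsu] at this
        rw [div_le_div_iff₀ (by linarith) (by linarith)] at this
        nlinarith
  have hg1 : g 1 = 0 := by simp [hg]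
  have hcont : Continuous g := by
    have : Continuous Φ := intervalIntegral.continuous_primitive
      (fun a b => hf.intervalIntegrable a b) 0
    fun_prop
  have main : g t ≤ g 1 := by
    rcases le_total t 1 with h | h
    · have hmono : MonotoneOn g (Set.Icc t 1) := by
        apply monotoneOn_of_deriv_nonneg (convex_Icc t 1) hcont.continuousOn
          (fun x _ => (hg' x).differentiableAt.differentiableWithinAt)
        intro x hx
        rw [interior_Icc, Set.mem_Ioo] at hx
        rw [(hg' x).deriv]
        exact (key x (lt_of_le_of_lt ht hx.1)).1 hx.2.le
      exact hmono (Set.mem_Icc.2 ⟨le_refl t, h⟩) (Set.mem_Icc.2 ⟨h, le_refl 1⟩) h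
    · have hmono : AntitoneOn g (Set.Icc 1 t) := by
        apply antitoneOn_of_deriv_nonpos (convex_Icc 1 t) hcont.continuousOn
          (fun x _ => (hg' x).differentiableAt.differentiableWithinAt)
        intro x hx
        rw [interior_Icc, Set.mem_Ioo] at hx
        rw [(hg' x).deriv]
        exact (key x (lt_trans one_pos hx.1)).2 hx.1.le
      exact hmono (Set.mem_Icc.2 ⟨le_refl 1, h⟩) (Set.mem_Icc.2 ⟨h, le_refl t⟩) h
  rw [hg1] at main
  exact main
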